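/- The polynomial x⁶ + 2x⁴ − x³ + 2x² + 1 ∈ ℤ[x] is irreducible over ℚ, has no real roots, and has exactly two complex roots of absolute value 1 (a complex-conjugate pair), the remaining four roots having absolute value different from 1. -/

import Mathlib

open Matrix Polynomial
open scoped Classical

noncomputable section

/-- The `n`-torus `ℝⁿ/ℤⁿ`, realized as `Fin n → ℝ/ℤ`. -/
abbrev Torus (n : ℕ) := Fin n → AddCircle (1 : ℝ)

/-- The projection `p : ℝⁿ → Tⁿ`. -/
def torusProj (n : ℕ) (x : Fin n → ℝ) : Torus n := fun i => (x i : AddCircle (1 : ℝ))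

/-- The linear action of an integer matrix on `ℝⁿ`. -/
def realMulVec {n : ℕ} (A : Matrix (Fin n) (Fin n) ℤ) (x : Fin n → ℝ) : Fin n → ℝ :=
  (A.map (Int.cast : ℤ → ℝ)).mulVec x

/-- The complex eigenvalues (with multiplicity) of an integer matrix. -/
def eigsC {n : ℕ} (A : Matrix (Fin n) (Fin n) ℤ) : Multiset ℂ :=
  ((A.map (Int.cast : ℤ → ℂ)).charpoly).roots

/-- A complex number is a root of unity if some positive power of it is `1`. -/
def IsRootOfUnity (z : ℂ) : Prop := ∃ k : ℕ, 1 ≤ k ∧ z ^ k = 1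
/-- The sextic `x⁶ + 2x⁴ − x³ + 2x² + 1`. -/
def Q14 : Polynomial ℤ := X ^ 6 + 2 * X ^ 4 - X ^ 3 + 2 * X ^ 2 + 1

private lemma two_eq_zero : (2 : Polynomial (ZMod 2)) = 0 := by
  have h := _root_.map_ofNat (C : ZMod 2 →+* Polynomial (ZMod 2)) 2
  rw [← h, show (OfNat.ofNat 2 : ZMod 2) = 0 from rfl, _root_.map_zero]

private lemma not_dvd_of_rem {F : Type*} [Field F] (a q r f : Polynomial F)
    (h : f = a * q + r) (hr : r ≠ 0) (hd : r.degree < a.degree) : ¬ a ∣ f := by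
  intro hdvd
  have hra : a ∣ r := by
    have : r = f - a * q := by rw [h]; ring
    rw [this]; exact dvd_sub hdvd (Dvd.intro q rfl)
  exact hr (Polynomial.eq_zero_of_dvd_of_degree_lt hra hd)

set_option maxHeartbeats 1000000 in
private lemma f2_not_low_dvd (g : Polynomial (ZMod 2)) (hg : g.Monic)
    (h1 : 1 ≤ g.natDegree) (h3 : g.natDegree ≤ 3) :
    ¬ g ∣ (X ^ 6 + X ^ 3 + 1 : Polynomial (ZMod 2)) := by
  have two : ∀ x : ZMod 2, x = 0 ∨ x = 1 := by decide
  have e := hg.as_sum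
  rcases (by omega : g.natDegree = 1 ∨ g.natDegree = 2 ∨ g.natDegree = 3) with h | h | h
  · rw [h] at e
    have hdeg : g.degree = ((1 : ℕ) : WithBot ℕ) := by
      rw [Polynomial.degree_eq_natDegree hg.ne_zero, h]
    simp only [Finset.sum_range_succ, Finset.sum_range_zero, zero_add, pow_zero,
      pow_one, mul_one] at e
    rcases two (g.coeff 0) with c0 | c0 <;> rw [c0] at e <;>
      simp only [_root_.map_zero, _root_.map_one, zero_mul, one_mul, zero_add, add_zero] at e
    · refine not_dvd_of_rem g (X^5 + X^2) (1) _ ?_ ?_ ?_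
      · linear_combination (-X^5 - X^2 : Polynomial (ZMod 2)) * e
      · intro hr0; have hc := congrArg (fun p => Polynomial.coeff p 0) hr0
        simp at hc
      · rw [hdeg]
        refine lt_of_le_of_lt (show Polynomial.degree ((1) : Polynomial (ZMod 2)) ≤ ((0:ℕ) : WithBot ℕ) from by compute_degree!) ?_
        exact_mod_cast (by norm_num : (0:ℕ) < 1)
    · refine not_dvd_of_rem g (X^5 + X^4 + X^3) (1) _ ?_ ?_ ?_
      · linear_combination (-X^5 - X^4 - X^3 : Polynomial (ZMod 2)) * e + (-X^5 - X^4 : Polynomial (ZMod 2)) * two_eq_zero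
      · intro hr0; have hc := congrArg (fun p => Polynomial.coeff p 0) hr0
        simp at hc
      · rw [hdeg]
        refine lt_of_le_of_lt (show Polynomial.degree ((1) : Polynomial (ZMod 2)) ≤ ((0:ℕ) : WithBot ℕ) from by compute_degree!) ?_
        exact_mod_cast (by norm_num : (0:ℕ) < 1)
  · rw [h] at e
    have hdeg : g.degree = ((2 : ℕ) : WithBot ℕ) := by
      rw [Polynomial.degree_eq_natDegree hg.ne_zero, h]
    simp only [Finset.sum_range_succ, Finset.sum_range_zero, zero_add, pow_zero,
      pow_one, mul_one] at e
    rcases two (g.coeff 0) with c0 | c0 <;> rw [c0] at e <;>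
      simp only [_root_.map_zero, _root_.map_one, zero_mul, one_mul, zero_add, add_zero] at e
    · rcases two (g.coeff 1) with c1 | c1 <;> rw [c1] at e <;>
        simp only [_root_.map_zero, _root_.map_one, zero_mul, one_mul, zero_add, add_zero] at e
      · refine not_dvd_of_rem g (X^4 + X) (1) _ ?_ ?_ ?_
        · linear_combination (-X^4 - X : Polynomial (ZMod 2)) * e
        · intro hr0; have hc := congrArg (fun p => Polynomial.coeff p 0) hr0
          simp at hc
        · rw [hdeg]
          refine lt_of_le_of_lt (show Polynomial.degree ((1) : Polynomial (ZMod 2)) ≤ ((0:ℕ) : WithBot ℕ) from by compute_degree!) ?_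
          exact_mod_cast (by norm_num : (0:ℕ) < 2)
      · refine not_dvd_of_rem g (X^4 + X^3 + X^2) (1) _ ?_ ?_ ?_
        · linear_combination (-X^4 - X^3 - X^2 : Polynomial (ZMod 2)) * e + (-X^5 - X^4 : Polynomial (ZMod 2)) * two_eq_zero
        · intro hr0; have hc := congrArg (fun p => Polynomial.coeff p 0) hr0
          simp at hc
        · rw [hdeg]
          refine lt_of_le_of_lt (show Polynomial.degree ((1) : Polynomial (ZMod 2)) ≤ ((0:ℕ) : WithBot ℕ) from by compute_degree!) ?_
          exact_mod_cast (by norm_num : (0:ℕ) < 2)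
    · rcases two (g.coeff 1) with c1 | c1 <;> rw [c1] at e <;>
        simp only [_root_.map_zero, _root_.map_one, zero_mul, one_mul, zero_add, add_zero] at e
      · refine not_dvd_of_rem g (X^4 + X^2 + X + 1) (X) _ ?_ ?_ ?_
        · linear_combination (-X^4 - X^2 - X - 1 : Polynomial (ZMod 2)) * e + (-X^4 - X^2 - X : Polynomial (ZMod 2)) * two_eq_zero
        · intro hr0; have hc := congrArg (fun p => Polynomial.coeff p 1) hr0
          simp at hc
        · rw [hdeg]
          refine lt_of_le_of_lt (show Polynomial.degree ((X) : Polynomial (ZMod 2)) ≤ ((1:ℕ) : WithBot ℕ) from by compute_degree!) ?_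
          exact_mod_cast (by norm_num : (1:ℕ) < 2)
      · refine not_dvd_of_rem g (X^4 + X^3) (1) _ ?_ ?_ ?_
        · linear_combination (-X^4 - X^3 : Polynomial (ZMod 2)) * e + (-X^5 - X^4 : Polynomial (ZMod 2)) * two_eq_zero
        · intro hr0; have hc := congrArg (fun p => Polynomial.coeff p 0) hr0
          simp at hc
        · rw [hdeg]
          refine lt_of_le_of_lt (show Polynomial.degree ((1) : Polynomial (ZMod 2)) ≤ ((0:ℕ) : WithBot ℕ) from by compute_degree!) ?_
          exact_mod_cast (by norm_num : (0:ℕ) < 2)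
  · rw [h] at e
    have hdeg : g.degree = ((3 : ℕ) : WithBot ℕ) := by
      rw [Polynomial.degree_eq_natDegree hg.ne_zero, h]
    simp only [Finset.sum_range_succ, Finset.sum_range_zero, zero_add, pow_zero,
      pow_one, mul_one] at e
    rcases two (g.coeff 0) with c0 | c0 <;> rw [c0] at e <;>
      simp only [_root_.map_zero, _root_.map_one, zero_mul, one_mul, zero_add, add_zero] at e
    · rcases two (g.coeff 1) with c1 | c1 <;> rw [c1] at e <;>
        simp only [_root_.map_zero, _root_.map_one, zero_mul, one_mul, zero_add, add_zero] at e
      · rcases two (g.coeff 2) with c2 | c2 <;> rw [c2] at e <;>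
          simp only [_root_.map_zero, _root_.map_one, zero_mul, one_mul, zero_add, add_zero] at e
        · refine not_dvd_of_rem g (X^3 + 1) (1) _ ?_ ?_ ?_
          · linear_combination (-X^3 - 1 : Polynomial (ZMod 2)) * e
          · intro hr0; have hc := congrArg (fun p => Polynomial.coeff p 0) hr0
            simp at hc
          · rw [hdeg]
            refine lt_of_le_of_lt (show Polynomial.degree ((1) : Polynomial (ZMod 2)) ≤ ((0:ℕ) : WithBot ℕ) from by compute_degree!) ?_
            exact_mod_cast (by norm_num : (0:ℕ) < 3)
        · refine not_dvd_of_rem g (X^3 + X^2 + X) (1) _ ?_ ?_ ?_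
          · linear_combination (-X^3 - X^2 - X : Polynomial (ZMod 2)) * e + (-X^5 - X^4 : Polynomial (ZMod 2)) * two_eq_zero
          · intro hr0; have hc := congrArg (fun p => Polynomial.coeff p 0) hr0
            simp at hc
          · rw [hdeg]
            refine lt_of_le_of_lt (show Polynomial.degree ((1) : Polynomial (ZMod 2)) ≤ ((0:ℕ) : WithBot ℕ) from by compute_degree!) ?_
            exact_mod_cast (by norm_num : (0:ℕ) < 3)
      · rcases two (g.coeff 2) with c2 | c2 <;> rw [c2] at e <;>
          simp only [_root_.map_zero, _root_.map_one, zero_mul, one_mul, zero_add, add_zero] at e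
        · refine not_dvd_of_rem g (X^3 + X + 1) (X^2 + X + 1) _ ?_ ?_ ?_
          · linear_combination (-X^3 - X - 1 : Polynomial (ZMod 2)) * e + (-X^4 - X^2 - X : Polynomial (ZMod 2)) * two_eq_zero
          · intro hr0; have hc := congrArg (fun p => Polynomial.coeff p 0) hr0
            simp at hc
          · rw [hdeg]
            refine lt_of_le_of_lt (show Polynomial.degree ((X^2 + X + 1) : Polynomial (ZMod 2)) ≤ ((2:ℕ) : WithBot ℕ) from by compute_degree!) ?_
            exact_mod_cast (by norm_num : (2:ℕ) < 3)
        · refine not_dvd_of_rem g (X^3 + X^2) (1) _ ?_ ?_ ?_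
          · linear_combination (-X^3 - X^2 : Polynomial (ZMod 2)) * e + (-X^5 - X^4 : Polynomial (ZMod 2)) * two_eq_zero
          · intro hr0; have hc := congrArg (fun p => Polynomial.coeff p 0) hr0
            simp at hc
          · rw [hdeg]
            refine lt_of_le_of_lt (show Polynomial.degree ((1) : Polynomial (ZMod 2)) ≤ ((0:ℕ) : WithBot ℕ) from by compute_degree!) ?_
            exact_mod_cast (by norm_num : (0:ℕ) < 3)
    · rcases two (g.coeff 1) with c1 | c1 <;> rw [c1] at e <;>
        simp only [_root_.map_zero, _root_.map_one, zero_mul, one_mul, zero_add, add_zero] at e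
      · rcases two (g.coeff 2) with c2 | c2 <;> rw [c2] at e <;>
          simp only [_root_.map_zero, _root_.map_one, zero_mul, one_mul, zero_add, add_zero] at e
        · refine not_dvd_of_rem g (X^3) (1) _ ?_ ?_ ?_
          · linear_combination (-X^3 : Polynomial (ZMod 2)) * e
          · intro hr0; have hc := congrArg (fun p => Polynomial.coeff p 0) hr0
            simp at hc
          · rw [hdeg]
            refine lt_of_le_of_lt (show Polynomial.degree ((1) : Polynomial (ZMod 2)) ≤ ((0:ℕ) : WithBot ℕ) from by compute_degree!) ?_
            exact_mod_cast (by norm_num : (0:ℕ) < 3)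
        · refine not_dvd_of_rem g (X^3 + X^2 + X + 1) (X) _ ?_ ?_ ?_
          · linear_combination (-X^3 - X^2 - X - 1 : Polynomial (ZMod 2)) * e + (-X^5 - X^4 - X^3 - X^2 - X : Polynomial (ZMod 2)) * two_eq_zero
          · intro hr0; have hc := congrArg (fun p => Polynomial.coeff p 1) hr0
            simp at hc
          · rw [hdeg]
            refine lt_of_le_of_lt (show Polynomial.degree ((X) : Polynomial (ZMod 2)) ≤ ((1:ℕ) : WithBot ℕ) from by compute_degree!) ?_
            exact_mod_cast (by norm_num : (1:ℕ) < 3)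
      · rcases two (g.coeff 2) with c2 | c2 <;> rw [c2] at e <;>
          simp only [_root_.map_zero, _root_.map_one, zero_mul, one_mul, zero_add, add_zero] at e
        · refine not_dvd_of_rem g (X^3 + X) (X^2 + X + 1) _ ?_ ?_ ?_
          · linear_combination (-X^3 - X : Polynomial (ZMod 2)) * e + (-X^4 - X^2 - X : Polynomial (ZMod 2)) * two_eq_zero
          · intro hr0; have hc := congrArg (fun p => Polynomial.coeff p 0) hr0
            simp at hc
          · rw [hdeg]
            refine lt_of_le_of_lt (show Polynomial.degree ((X^2 + X + 1) : Polynomial (ZMod 2)) ≤ ((2:ℕ) : WithBot ℕ) from by compute_degree!) ?_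
            exact_mod_cast (by norm_num : (2:ℕ) < 3)
        · refine not_dvd_of_rem g (X^3 + X^2 + 1) (X) _ ?_ ?_ ?_
          · linear_combination (-X^3 - X^2 - 1 : Polynomial (ZMod 2)) * e + (-X^5 - X^4 - X^3 - X^2 - X : Polynomial (ZMod 2)) * two_eq_zero
          · intro hr0; have hc := congrArg (fun p => Polynomial.coeff p 1) hr0
            simp at hc
          · rw [hdeg]
            refine lt_of_le_of_lt (show Polynomial.degree ((X) : Polynomial (ZMod 2)) ≤ ((1:ℕ) : WithBot ℕ) from by compute_degree!) ?_
            exact_mod_cast (by norm_num : (1:ℕ) < 3)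

private lemma f2_natDegree : (X ^ 6 + X ^ 3 + 1 : Polynomial (ZMod 2)).natDegree = 6 := by
  compute_degree!

private lemma f2_irred : Irreducible (X ^ 6 + X ^ 3 + 1 : Polynomial (ZMod 2)) := by
  have two : ∀ x : ZMod 2, x = 0 ∨ x = 1 := by decide
  constructor
  · intro hu
    have h0 := Polynomial.natDegree_eq_zero_of_isUnit hu
    rw [f2_natDegree] at h0; exact (by norm_num : (6:ℕ) ≠ 0) h0
  · intro a b hab
    by_contra hcon
    push_neg at hcon
    obtain ⟨ha, hb⟩ := hcon
    have hf0 : (X ^ 6 + X ^ 3 + 1 : Polynomial (ZMod 2)) ≠ 0 := by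
      intro h0
      have := f2_natDegree; rw [h0] at this; simp at this
    have ha0 : a ≠ 0 := by rintro rfl; rw [zero_mul] at hab; exact hf0 hab
    have hb0 : b ≠ 0 := by rintro rfl; rw [mul_zero] at hab; exact hf0 hab
    have hdeg : a.natDegree + b.natDegree = 6 := by
      rw [← Polynomial.natDegree_mul ha0 hb0, ← hab, f2_natDegree]
    have hma : a.Monic := by
      rcases two a.leadingCoeff with h | h
      · exact absurd (Polynomial.leadingCoeff_eq_zero.mp h) ha0
      · exact h
    have hmb : b.Monic := by
      rcases two b.leadingCoeff with h | h
      · exact absurd (Polynomial.leadingCoeff_eq_zero.mp h) hb0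
      · exact h
    have hda : 1 ≤ a.natDegree := by
      rcases Nat.eq_zero_or_pos a.natDegree with h | h
      · exact absurd (by rw [hma.natDegree_eq_zero.mp h]; exact isUnit_one) ha
      · exact h
    have hdb : 1 ≤ b.natDegree := by
      rcases Nat.eq_zero_or_pos b.natDegree with h | h
      · exact absurd (by rw [hmb.natDegree_eq_zero.mp h]; exact isUnit_one) hb
      · exact h
    rcases le_or_gt a.natDegree 3 with h | h
    · exact f2_not_low_dvd a hma hda h ⟨b, hab⟩
    · exact f2_not_low_dvd b hmb hdb (by omega) ⟨a, by rw [hab]; ring⟩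

private lemma Q14_monic : Q14.Monic := by
  unfold Q14; monicity!

private lemma Q14_map2 : Q14.map (Int.castRingHom (ZMod 2)) = X ^ 6 + X ^ 3 + 1 := by
  unfold Q14
  simp only [Polynomial.map_add, Polynomial.map_sub, Polynomial.map_mul, Polynomial.map_pow,
    Polynomial.map_X, Polynomial.map_one, Polynomial.map_ofNat]
  linear_combination (X^4 - X^3 + X^2 : Polynomial (ZMod 2)) * two_eq_zero

private lemma Q14_irr_int : Irreducible Q14 :=
  Polynomial.Monic.irreducible_of_irreducible_map (Int.castRingHom (ZMod 2)) Q14 Q14_monic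
    (by rw [Q14_map2]; exact f2_irred)

private lemma Q14_irr_rat : Irreducible (Q14.map (Int.castRingHom ℚ)) :=
  (Polynomial.IsPrimitive.Int.irreducible_iff_irreducible_map_cast Q14_monic.isPrimitive).mp
    Q14_irr_int

private lemma Q14_evalC (z : ℂ) :
    (Q14.map (Int.castRingHom ℂ)).eval z = z ^ 6 + 2 * z ^ 4 - z ^ 3 + 2 * z ^ 2 + 1 := by
  simp [Q14]

private lemma Q14_no_real_root (x : ℝ) :
    Polynomial.eval x (Q14.map (Int.castRingHom ℝ)) ≠ 0 := by
  have h : Polynomial.eval x (Q14.map (Int.castRingHom ℝ))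
      = x ^ 6 + 2 * x ^ 4 - x ^ 3 + 2 * x ^ 2 + 1 := by simp [Q14]
  rw [h]
  nlinarith [sq_nonneg (x * (x - 1/2)), sq_nonneg x, sq_nonneg (x^2), sq_nonneg (x^3), sq_nonneg (x - 1/2)]

private lemma exists_rho : ∃ ρ : ℝ, ρ ^ 3 = ρ + 1 ∧ 1 < ρ ∧ ρ < 2 := by
  have hcont : ContinuousOn (fun y : ℝ => y ^ 3 - y - 1) (Set.Icc 1 2) := by
    fun_prop
  have h := intermediate_value_Icc (by norm_num : (1:ℝ) ≤ 2) hcont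
  have h0 : (0:ℝ) ∈ Set.Icc ((1:ℝ)^3 - 1 - 1) ((2:ℝ)^3 - 2 - 1) := by norm_num
  obtain ⟨ρ, hmem, hval⟩ := h h0
  simp only [] at hval
  refine ⟨ρ, by nlinarith [hval], ?_, ?_⟩
  · rcases eq_or_lt_of_le hmem.1 with h1 | h1
    · exfalso; rw [← h1] at hval; norm_num at hval
    · exact h1
  · rcases eq_or_lt_of_le hmem.2 with h2 | h2
    · exfalso; rw [h2] at hval; norm_num at hval
    · exact h2

private lemma root_of_quad (ρ : ℝ) (hρ : ρ ^ 3 = ρ + 1) (w : ℂ)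
    (hw : w ^ 2 - (ρ:ℂ) * w + 1 = 0) :
    w ^ 6 + 2 * w ^ 4 - w ^ 3 + 2 * w ^ 2 + 1 = 0 := by
  have hρC : (ρ:ℂ) ^ 3 = (ρ:ℂ) + 1 := by exact_mod_cast congrArg (Complex.ofReal) hρ
  linear_combination (w ^ 4 + (ρ:ℂ) * w ^ 3 + ((ρ:ℂ) ^ 2 + 1) * w ^ 2 + (ρ:ℂ) * w + 1) * hw
    + w ^ 3 * hρC

-- sextic root on circle implies quadratic

private lemma quad_of_root (ρ : ℝ) (hρ : ρ ^ 3 = ρ + 1) (h1ρ : 1 < ρ) (z : ℂ)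
    (hz : z ^ 6 + 2 * z ^ 4 - z ^ 3 + 2 * z ^ 2 + 1 = 0) (habs : ‖z‖ = 1) :
    z ^ 2 - (ρ:ℂ) * z + 1 = 0 := by
  set y : ℝ := 2 * z.re with hy
  have hc : z * (starRingEnd ℂ) z = 1 := by
    rw [Complex.mul_conj,
      show Complex.normSq z = 1 from by rw [← Complex.sq_norm, habs]; norm_num]
    norm_num
  have ha : z + (starRingEnd ℂ) z = (y:ℂ) := by
    rw [Complex.add_conj, hy]
  have hq : z ^ 2 - (y:ℂ) * z + 1 = 0 := by
    linear_combination z * ha - hc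
  -- from hz and hq : (y³ - y - 1) z³ = 0
  have hz0 : z ≠ 0 := by
    intro h0; rw [h0] at habs; simp at habs
  have hy3C : ((y:ℂ) ^ 3 - y - 1) * z ^ 3 = 0 := by
    linear_combination hz - (z ^ 4 + (y:ℂ) * z ^ 3 + ((y:ℂ) ^ 2 + 1) * z ^ 2 + (y:ℂ) * z + 1) * hq
  have hy3 : y ^ 3 = y + 1 := by
    have := (mul_eq_zero.mp hy3C).resolve_right (pow_ne_zero 3 hz0)
    have h2 : ((y ^ 3 - y - 1 : ℝ) : ℂ) = 0 := by push_cast; linear_combination this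
    have h3 : (y ^ 3 - y - 1 : ℝ) = 0 := by exact_mod_cast h2
    linarith
  have hyρ : y = ρ := by
    have hfac : (y - ρ) * (y ^ 2 + y * ρ + ρ ^ 2 - 1) = 0 := by linear_combination hy3 - hρ
    have hpos : y ^ 2 + y * ρ + ρ ^ 2 - 1 > 0 := by nlinarith [sq_nonneg (2 * y + ρ)]
    have := (mul_eq_zero.mp hfac).resolve_right (by linarith)
    linarith
  rw [← hyρ]; exact hq

private lemma Q14_natDegree : Q14.natDegree = 6 := by unfold Q14; compute_degree!

/-- `Q14` is irreducible over `ℚ`, has no real roots, has exactly two complex roots of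
absolute value one (a complex-conjugate pair), and its remaining four roots have absolute
value different from one. -/
theorem Q14_irreducible_roots :
    Irreducible (Q14.map (Int.castRingHom ℚ)) ∧
    (∀ x : ℝ, Polynomial.eval x (Q14.map (Int.castRingHom ℝ)) ≠ 0) ∧
    (((Q14.map (Int.castRingHom ℂ)).roots.filter fun z => ‖z‖ = 1).card = 2) ∧
    (∃ z ∈ (Q14.map (Int.castRingHom ℂ)).roots, ‖z‖ = 1 ∧ z.im ≠ 0 ∧
      (starRingEnd ℂ) z ∈ (Q14.map (Int.castRingHom ℂ)).roots) ∧
    (((Q14.map (Int.castRingHom ℂ)).roots.filter fun z => ‖z‖ ≠ 1).card = 4) := by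
  obtain ⟨ρ, hρ, h1ρ, h2ρ⟩ := exists_rho
  set P : Polynomial ℂ := Q14.map (Int.castRingHom ℂ) with hP
  have hPmonic : P.Monic := Q14_monic.map _
  have hPne : P ≠ 0 := hPmonic.ne_zero
  have hPdeg : P.natDegree = 6 := by
    rw [hP, Q14_monic.natDegree_map, Q14_natDegree]
  -- roots card
  have hcard : P.roots.card = 6 := by
    rw [Polynomial.splits_iff_card_roots.mp (IsAlgClosed.splits P), hPdeg]
  -- nodup
  have hsep : P.Separable := by
    have h1 : (Q14.map (Int.castRingHom ℚ)).Separable := Q14_irr_rat.separable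
    have h2 := h1.map (f := algebraMap ℚ ℂ)
    rwa [Polynomial.map_map, show (algebraMap ℚ ℂ).comp (Int.castRingHom ℚ)
      = Int.castRingHom ℂ from RingHom.ext_int _ _] at h2
  have hnodup : P.roots.Nodup := Polynomial.nodup_roots hsep
  -- the two circle roots
  have h4ρ : 0 < 4 - ρ ^ 2 := by nlinarith
  set s : ℝ := Real.sqrt (4 - ρ ^ 2) with hs
  have hs2 : s ^ 2 = 4 - ρ ^ 2 := Real.sq_sqrt (le_of_lt h4ρ)
  have hspos : 0 < s := Real.sqrt_pos.mpr h4ρ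
  have hs2C : (s:ℂ) ^ 2 = 4 - (ρ:ℂ) ^ 2 := by exact_mod_cast congrArg Complex.ofReal hs2
  have hI : Complex.I ^ 2 = -1 := Complex.I_sq
  set z₀ : ℂ := ((ρ/2 : ℝ) : ℂ) + ((s/2 : ℝ) : ℂ) * Complex.I with hz₀
  set z₁ : ℂ := ((ρ/2 : ℝ) : ℂ) - ((s/2 : ℝ) : ℂ) * Complex.I with hz₁
  have hz₀q : z₀ ^ 2 - (ρ:ℂ) * z₀ + 1 = 0 := by
    rw [hz₀]; push_cast
    linear_combination (Complex.I ^ 2 / 4) * hs2C + (1 - (ρ:ℂ) ^ 2 / 4) * hI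
  have hz₁q : z₁ ^ 2 - (ρ:ℂ) * z₁ + 1 = 0 := by
    rw [hz₁]; push_cast
    linear_combination (Complex.I ^ 2 / 4) * hs2C + (1 - (ρ:ℂ) ^ 2 / 4) * hI
  have hstar : (starRingEnd ℂ) z₀ = z₁ := by
    rw [hz₀, hz₁, _root_.map_add, _root_.map_mul, Complex.conj_ofReal, Complex.conj_ofReal, Complex.conj_I]
    ring
  have hprod : z₀ * z₁ = 1 := by
    rw [hz₀, hz₁]; push_cast
    linear_combination (-Complex.I ^ 2 / 4) * hs2C + ((ρ:ℂ) ^ 2 / 4 - 1) * hI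
  have hsum : z₀ + z₁ = (ρ:ℂ) := by rw [hz₀, hz₁]; push_cast; ring
  have him0 : z₀.im = s / 2 := by rw [hz₀]; simp
  have him1 : z₁.im = -(s / 2) := by rw [hz₁]; simp
  have hne01 : z₀ ≠ z₁ := by
    intro h
    rw [Complex.ext_iff, him0, him1] at h
    have := h.2; linarith
  have habs0 : ‖z₀‖ = 1 := by
    have h1 : ‖z₀‖ ^ 2 = 1 := by
      rw [Complex.sq_norm, Complex.normSq_apply, him0, show z₀.re = ρ/2 from by rw [hz₀]; simp]
      nlinarith
    have h2 : 0 ≤ ‖z₀‖ := norm_nonneg _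
    nlinarith
  have habs1 : ‖z₁‖ = 1 := by
    have h1 : ‖z₁‖ ^ 2 = 1 := by
      rw [Complex.sq_norm, Complex.normSq_apply, him1, show z₁.re = ρ/2 from by rw [hz₁]; simp]
      nlinarith
    have h2 : 0 ≤ ‖z₁‖ := norm_nonneg _
    nlinarith
  have hmem : ∀ w : ℂ, w ∈ P.roots ↔ w ^ 6 + 2*w^4 - w^3 + 2*w^2 + 1 = 0 := by
    intro w
    rw [Polynomial.mem_roots hPne, Polynomial.IsRoot, Q14_evalC]
  have hmem0 : z₀ ∈ P.roots := (hmem z₀).mpr (root_of_quad ρ hρ z₀ hz₀q)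
  have hmem1 : z₁ ∈ P.roots := (hmem z₁).mpr (root_of_quad ρ hρ z₁ hz₁q)
  -- circle roots are exactly z₀, z₁
  have hchar : ∀ z ∈ P.roots, (‖z‖ = 1 ↔ (z = z₀ ∨ z = z₁)) := by
    intro z hz
    constructor
    · intro habs
      have hq := quad_of_root ρ hρ h1ρ z ((hmem z).mp hz) habs
      have hfac : (z - z₀) * (z - z₁) = 0 := by
        linear_combination hq - z * hsum + hprod
      rcases mul_eq_zero.mp hfac with h | h
      · exact Or.inl (by linear_combination h)
      · exact Or.inr (by linear_combination h)
    · rintro (rfl | rfl)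
      · exact habs0
      · exact habs1
  -- the filtered multiset
  have hfilter : P.roots.filter (fun z => ‖z‖ = 1) = {z₀, z₁} := by
    apply Multiset.Nodup.ext (Multiset.Nodup.filter _ hnodup) ?_ |>.mpr
    · intro a
      rw [Multiset.mem_filter]
      constructor
      · rintro ⟨ha, hb⟩
        rcases (hchar a ha).mp hb with rfl | rfl <;> simp
      · intro ha
        simp only [Multiset.insert_eq_cons, Multiset.mem_cons, Multiset.mem_singleton] at ha
        rcases ha with rfl | rfl
        · exact ⟨hmem0, habs0⟩
        · exact ⟨hmem1, habs1⟩
    · simp [hne01]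
  have hfcard : (P.roots.filter (fun z => ‖z‖ = 1)).card = 2 := by
    rw [hfilter]; simp
  have hncard : (P.roots.filter (fun z => ‖z‖ ≠ 1)).card = 4 := by
    have h := Multiset.filter_add_not (fun z => ‖z‖ = 1) P.roots
    have h2 := congrArg Multiset.card h
    rw [Multiset.card_add, hcard, hfcard] at h2
    have he : (Multiset.filter (fun z => ‖z‖ ≠ 1) P.roots)
        = Multiset.filter (fun a => ¬ ‖a‖ = 1) P.roots :=
      Multiset.filter_congr (fun x _ => by tauto)
    rw [he]
    omega
  refine ⟨Q14_irr_rat, Q14_no_real_root, hfcard, ⟨z₀, hmem0, habs0, ?_, ?_⟩, ?_⟩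
  · rw [him0]; positivity
  · rw [hstar]; exact hmem1
  · exact hncard
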